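/- arXiv:1407.2464 — 2 statements merged into one kernel-verified Lean document; each statement's English description precedes it below -/
import Mathlib

section
/- Let 𝓑 be a connected building set on a finite ground set S that is closed under intersection. Then every generating subset 𝓒 of 𝓑 contains the set Π(𝓑) of all 𝓑-paths. In particular, Π(𝓑) is the unique inclusion-minimal generating subset of 𝓑. -/
/-- `𝓑` is a building set on the finite ground set `V`: a collection of
nonempty subsets of `V` such that (B1) the union of two intersecting elements
is again an element, and (B2) all singletons are elements. -/
def IsBuilding {V : Type*} [DecidableEq V] (𝓑 : Set (Finset V)) : Prop :=
  (∀ B ∈ 𝓑, B.Nonempty) ∧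
  (∀ B ∈ 𝓑, ∀ B' ∈ 𝓑, (B ∩ B').Nonempty → B ∪ B' ∈ 𝓑) ∧
  (∀ s : V, ({s} : Finset V) ∈ 𝓑)

/-- `P` is the `𝓑`-path `π(s,t)`: the inclusion-smallest element of `𝓑`
containing both `s` and `t`. -/
def IsMinPath {V : Type*} (𝓑 : Set (Finset V)) (s t : V) (P : Finset V) : Prop :=
  P ∈ 𝓑 ∧ s ∈ P ∧ t ∈ P ∧ ∀ B ∈ 𝓑, s ∈ B → t ∈ B → P ⊆ B

/-- `P` is a `𝓑`-path, i.e. an element of `Π(𝓑)`. -/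
def IsBPath {V : Type*} (𝓑 : Set (Finset V)) (P : Finset V) : Prop :=
  ∃ s t : V, IsMinPath 𝓑 s t P

/-- `𝓒` is a generating subset of `𝓑`: for every `B ∈ 𝓑` and `b ∈ B`, the set
`B` is the union of the elements `C ∈ 𝓒` with `b ∈ C ⊆ B`. -/
def IsGenerating {V : Type*} (𝓑 𝓒 : Set (Finset V)) : Prop :=
  𝓒 ⊆ 𝓑 ∧ ∀ B ∈ 𝓑, ∀ b ∈ B,
    (B : Set V) = ⋃ C ∈ {C : Finset V | C ∈ 𝓒 ∧ b ∈ C ∧ C ⊆ B}, (C : Set V)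

open Classical in
/-- Minimal paths exist when `𝓑` is connected and closed under intersection. -/
lemma minPath_exists {V : Type*} [Fintype V] [DecidableEq V]
    (𝓑 : Set (Finset V))
    (hconn : (Finset.univ : Finset V) ∈ 𝓑)
    (hclosed : ∀ B ∈ 𝓑, ∀ B' ∈ 𝓑, (B ∩ B').Nonempty → B ∩ B' ∈ 𝓑)
    (s t : V) : ∃ P, IsMinPath 𝓑 s t P := by
  classical
  let F : Finset (Finset V) :=
    Finset.univ.filter (fun B => B ∈ 𝓑 ∧ s ∈ B ∧ t ∈ B)
  have hne : F.Nonempty := ⟨Finset.univ, by simp [F, hconn]⟩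
  obtain ⟨P, hPF, hmin⟩ := F.exists_min_image Finset.card hne
  simp only [F, Finset.mem_filter, Finset.mem_univ, true_and] at hPF
  obtain ⟨hP𝓑, hsP, htP⟩ := hPF
  refine ⟨P, hP𝓑, hsP, htP, ?_⟩
  intro B hB hsB htB
  have hI : P ∩ B ∈ 𝓑 := hclosed P hP𝓑 B hB ⟨s, by simp [hsP, hsB]⟩
  have hIF : P ∩ B ∈ F := by
    simp [F, hI, hsP, hsB, htP, htB]
  have hle := hmin _ hIF
  have hsub : P ∩ B ⊆ P := Finset.inter_subset_left
  have heq : P ∩ B = P := Finset.eq_of_subset_of_card_le hsub hle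
  intro x hx
  rw [← heq] at hx
  exact Finset.mem_of_mem_inter_right hx

/-- `Π(𝓑)` is a generating subset. -/
lemma bPaths_generating {V : Type*} [Fintype V] [DecidableEq V]
    (𝓑 : Set (Finset V))
    (hconn : (Finset.univ : Finset V) ∈ 𝓑)
    (hclosed : ∀ B ∈ 𝓑, ∀ B' ∈ 𝓑, (B ∩ B').Nonempty → B ∩ B' ∈ 𝓑) :
    IsGenerating 𝓑 {P : Finset V | IsBPath 𝓑 P} := by
  constructor
  · rintro P ⟨s, t, hP, _⟩
    exact hP
  · intro B hB b hb
    ext x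
    simp only [Set.mem_iUnion, Set.mem_setOf_eq, Finset.coe_mem, exists_prop]
    constructor
    · intro hx
      obtain ⟨P, hmp⟩ := minPath_exists 𝓑 hconn hclosed b x
      exact ⟨P, ⟨⟨b, x, hmp⟩, hmp.2.1, hmp.2.2.2 B hB hb hx⟩, hmp.2.2.1⟩
    · rintro ⟨P, ⟨_, _, hPB⟩, hxP⟩
      exact hPB hxP

/-- For a connected building set `𝓑` closed under intersection, every
generating subset of `𝓑` contains the set `Π(𝓑)` of all `𝓑`-paths; in
particular, `Π(𝓑)` is the unique inclusion-minimal generating subset of `𝓑`. -/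
theorem bPaths_subset_generating {V : Type*} [Fintype V] [DecidableEq V]
    (𝓑 : Set (Finset V)) (hbuild : IsBuilding 𝓑)
    (hconn : (Finset.univ : Finset V) ∈ 𝓑)
    (hclosed : ∀ B ∈ 𝓑, ∀ B' ∈ 𝓑, (B ∩ B').Nonempty → B ∩ B' ∈ 𝓑) :
    (∀ 𝓒 : Set (Finset V), IsGenerating 𝓑 𝓒 → {P : Finset V | IsBPath 𝓑 P} ⊆ 𝓒) ∧
    (∀ 𝓒 : Set (Finset V), IsGenerating 𝓑 𝓒 →
      (∀ 𝓒' : Set (Finset V), IsGenerating 𝓑 𝓒' → 𝓒 ⊆ 𝓒') →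
      𝓒 = {P : Finset V | IsBPath 𝓑 P}) := by
  have key : ∀ 𝓒 : Set (Finset V), IsGenerating 𝓑 𝓒 →
      {P : Finset V | IsBPath 𝓑 P} ⊆ 𝓒 := by
    rintro 𝓒 ⟨h𝓒, hgen⟩ P ⟨s, t, hP𝓑, hsP, htP, hmin⟩
    have := hgen P hP𝓑 s hsP
    have htP' : (t : V) ∈ (P : Set V) := htP
    rw [this] at htP'
    simp only [Set.mem_iUnion, Set.mem_setOf_eq, exists_prop] at htP'
    obtain ⟨C, ⟨hC𝓒, hsC, hCP⟩, htC⟩ := htP'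
    have : P ⊆ C := hmin C (h𝓒 hC𝓒) hsC htC
    have : C = P := Finset.Subset.antisymm hCP this
    exact this ▸ hC𝓒
  refine ⟨key, fun 𝓒 hgen hminimal => ?_⟩
  exact Set.Subset.antisymm (hminimal _ (bPaths_generating 𝓑 hconn hclosed)) (key 𝓒 hgen)
end

section
/- Let 𝓑 be a connected building set on a finite ground set S that is closed under intersection, and for S' ⊆ S let ȳ_{S'} be the number of unordered pairs {s, t} of elements of S (allowing s = t) such that π(s,t) = S'. Then: (i) ȳ_{S'} > 0 if S' ∈ Π(𝓑) and ȳ_{S'} = 0 otherwise; (ii) for every B ∈ 𝓑, Σ_{S' ⊆ B} ȳ_{S'} = C(|B| + 1, 2), where C(n, 2) denotes the binomial coefficient n choose 2. -/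
/-- The dilation coefficient `ȳ_{S'}`: the number of unordered pairs `{s, t}`
of elements of the ground set (allowing `s = t`) whose `𝓑`-path `π(s,t)`
equals `S'`. -/
noncomputable def ybar {V : Type*} (𝓑 : Set (Finset V)) (S' : Finset V) : ℕ :=
  Set.ncard {z : Sym2 V | ∃ s t : V, z = Sym2.mk s t ∧ IsMinPath 𝓑 s t S'}

lemma minPath_unique {V : Type*} {𝓑 : Set (Finset V)} {s t : V} {P P' : Finset V}
    (h : IsMinPath 𝓑 s t P) (h' : IsMinPath 𝓑 s t P') : P = P' :=
  Finset.Subset.antisymm (h.2.2.2 P' h'.1 h'.2.1 h'.2.2.1) (h'.2.2.2 P h.1 h.2.1 h.2.2.1)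

lemma exists_minPath {V : Type*} [Fintype V] [DecidableEq V] {𝓑 : Set (Finset V)}
    (hconn : (Finset.univ : Finset V) ∈ 𝓑)
    (hclosed : ∀ B ∈ 𝓑, ∀ B' ∈ 𝓑, (B ∩ B').Nonempty → B ∩ B' ∈ 𝓑)
    (s t : V) : ∃ P, IsMinPath 𝓑 s t P := by
  classical
  set T := Finset.univ.powerset.filter (fun B => B ∈ 𝓑 ∧ s ∈ B ∧ t ∈ B) with hTdef
  have hT : T.Nonempty :=
    ⟨Finset.univ, by simp [hTdef, hconn]⟩
  obtain ⟨P, hP, hmin⟩ := T.exists_min_image Finset.card hT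
  simp only [hTdef, Finset.mem_filter, Finset.mem_powerset] at hP
  refine ⟨P, hP.2.1, hP.2.2.1, hP.2.2.2, ?_⟩
  intro B hB hsB htB
  have hPB : P ∩ B ∈ 𝓑 := hclosed P hP.2.1 B hB ⟨s, Finset.mem_inter.2 ⟨hP.2.2.1, hsB⟩⟩
  have hmem : P ∩ B ∈ T := by
    simp only [hTdef, Finset.mem_filter, Finset.mem_powerset]
    exact ⟨Finset.subset_univ _, hPB, Finset.mem_inter.2 ⟨hP.2.2.1, hsB⟩,
      Finset.mem_inter.2 ⟨hP.2.2.2, htB⟩⟩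
  have hle := hmin _ hmem
  have heq : P ∩ B = P := Finset.eq_of_subset_of_card_le Finset.inter_subset_left hle
  calc P = P ∩ B := heq.symm
    _ ⊆ B := Finset.inter_subset_right

/-- For a connected building set `𝓑` closed under intersection:
(i) `ȳ_{S'} > 0` if `S'` is a `𝓑`-path and `ȳ_{S'} = 0` otherwise;
(ii) for every `B ∈ 𝓑`, the sum of `ȳ_{S'}` over all `S' ⊆ B` equals the
binomial coefficient `C(|B| + 1, 2)`. -/
theorem ybar_pos_iff_and_sum {V : Type*} [Fintype V] [DecidableEq V]
    (𝓑 : Set (Finset V)) (hbuild : IsBuilding 𝓑)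
    (hconn : (Finset.univ : Finset V) ∈ 𝓑)
    (hclosed : ∀ B ∈ 𝓑, ∀ B' ∈ 𝓑, (B ∩ B').Nonempty → B ∩ B' ∈ 𝓑) :
    (∀ S' : Finset V,
      (IsBPath 𝓑 S' → 0 < ybar 𝓑 S') ∧ (¬ IsBPath 𝓑 S' → ybar 𝓑 S' = 0)) ∧
    (∀ B ∈ 𝓑, ∑ S' ∈ B.powerset, ybar 𝓑 S' = (B.card + 1).choose 2) := by
  classical
  constructor
  · intro S'
    constructor
    · rintro ⟨s, t, hst⟩
      refine (Set.ncard_pos (Set.toFinite _)).2 ⟨Sym2.mk s t, s, t, rfl, hst⟩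
    · intro hnot
      have : {z : Sym2 V | ∃ s t : V, z = Sym2.mk s t ∧ IsMinPath 𝓑 s t S'} = ∅ := by
        ext z
        simp only [Set.mem_setOf_eq, Set.mem_empty_iff_false, iff_false]
        rintro ⟨s, t, _, h⟩
        exact hnot ⟨s, t, h⟩
      rw [ybar, this, Set.ncard_empty]
  · intro B hB
    -- rewrite ybar as a Finset card
    have hyb : ∀ S' : Finset V, ybar 𝓑 S' =
        (Finset.univ.filter
          (fun z : Sym2 V => ∃ s t : V, z = Sym2.mk s t ∧ IsMinPath 𝓑 s t S')).card := by
      intro S'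
      rw [ybar, ← Set.toFinset_setOf, Set.ncard_eq_toFinset_card']
    simp only [hyb]
    rw [← Finset.card_biUnion]
    · have hbi : B.powerset.biUnion
          (fun S' => Finset.univ.filter
            (fun z : Sym2 V => ∃ s t : V, z = Sym2.mk s t ∧ IsMinPath 𝓑 s t S'))
          = B.sym2 := by
        ext z
        simp only [Finset.mem_biUnion, Finset.mem_filter, Finset.mem_powerset,
          Finset.mem_univ, true_and]
        constructor
        · rintro ⟨S', hS'B, s, t, rfl, hst⟩
          rw [Finset.mk_mem_sym2_iff]
          exact ⟨hS'B hst.2.1, hS'B hst.2.2.1⟩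
        · intro hz
          induction z with
          | _ s t =>
            rw [Finset.mk_mem_sym2_iff] at hz
            obtain ⟨P, hP⟩ := exists_minPath hconn hclosed s t
            exact ⟨P, hP.2.2.2 B hB hz.1 hz.2, s, t, rfl, hP⟩
      rw [hbi, Finset.card_sym2]
    · intro S1 h1 S2 h2 hne
      simp only [Finset.disjoint_left, Finset.mem_filter, Finset.mem_univ, true_and]
      rintro z ⟨s, t, rfl, hst⟩ ⟨s', t', heq, hst'⟩
      apply hne
      rw [Sym2.eq, Sym2.rel_iff'] at heq
      rcases heq with ⟨h1, h2⟩ | ⟨h1, h2⟩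
      · exact minPath_unique hst hst'
      · exact minPath_unique hst ⟨hst'.1, hst'.2.2.1, hst'.2.1,
          fun B hB hs ht => hst'.2.2.2 B hB ht hs⟩
end
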